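/- Let G be a 2-connected graph with B ⊆ V(G) such that (6/5)·δ(G−B) ≥ |V(G)| and δ(G−B) ≥ 4|B|. Then for any pair of distinct vertices s, t ∈ V(G), every longest (s,t)-path in G contains all vertices of V(G)\B. -/

import Mathlib

set_option linter.unusedSectionVars false
set_option maxHeartbeats 1000000

namespace StmtAux

open SimpleGraph Walk

variable {V : Type*} [DecidableEq V] {G : SimpleGraph V}

/-- Append of two paths meeting only at the junction is a path. -/
lemma isPath_append_inter {u v w : V} {p : G.Walk u v} {q : G.Walk v w}
    (hp : p.IsPath) (hq : q.IsPath)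
    (h : ∀ x, x ∈ p.support → x ∈ q.support → x = v) :
    (p.append q).IsPath := by
  rw [Walk.isPath_def, Walk.support_append]
  have hqs : q.support = v :: q.support.tail := (q.support_eq_cons)
  have hnd : q.support.tail.Nodup := by
    have := hq.support_nodup
    rw [hqs] at this
    exact (List.nodup_cons.mp this).2
  have hvnt : v ∉ q.support.tail := by
    have := hq.support_nodup
    rw [hqs] at this
    exact (List.nodup_cons.mp this).1
  refine List.Nodup.append hp.support_nodup hnd ?_
  intro x hxp hxq
  have hxq' : x ∈ q.support := by rw [hqs]; exact List.mem_cons_of_mem _ hxq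
  have := h x hxp hxq'
  subst this
  exact hvnt hxq

/-- Split a walk at the first vertex belonging to `T`. -/
lemma exists_prefix_first_hit {u v : V} (W : G.Walk u v) (T : Set V)
    (hx : ∃ x ∈ W.support, x ∈ T) :
    ∃ f, f ∈ T ∧ ∃ (Q : G.Walk u f) (R : G.Walk f v),
      W = Q.append R ∧ ∀ x ∈ Q.support, x ∈ T → x = f := by
  induction W with
  | nil =>
    refine ⟨_, ?_, Walk.nil, Walk.nil, rfl, by simp⟩
    simpa using hx
  | @cons a b c h W ih =>
    by_cases hu : a ∈ T
    · exact ⟨a, hu, Walk.nil, Walk.cons h W, rfl, by simp⟩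
    · have hx' : ∃ x ∈ W.support, x ∈ T := by
        obtain ⟨x, hxs, hxT⟩ := hx
        rcases List.mem_cons.mp (Walk.support_cons h W ▸ hxs : x ∈ a :: W.support) with h1 | h2
        · exact absurd (h1 ▸ hxT) hu
        · exact ⟨x, h2, hxT⟩
      obtain ⟨f, hf, Q, R, hW, hQ⟩ := ih hx'
      refine ⟨f, hf, Walk.cons h Q, R, ?_, ?_⟩
      · rw [Walk.cons_append, hW]
      · intro x hxs hxT
        rcases List.mem_cons.mp (Walk.support_cons h Q ▸ hxs : x ∈ a :: Q.support) with h1 | h2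
        · exact absurd (h1 ▸ hxT) hu
        · exact hQ x h2 hxT


lemma exists_prefix_first_hit' {u v : V} (W : G.Walk u v) (T : Set V)
    (hx : ∃ x ∈ W.support, x ∈ T) :
    ∃ f, f ∈ T ∧ ∃ (Q : G.Walk u f), Q.support ⊆ W.support ∧
      (∀ x ∈ Q.support, x ∈ T → x = f) ∧ (W.IsPath → Q.IsPath) ∧ Q.length ≤ W.length := by
  obtain ⟨f, hf, Q, R, hW, hQ⟩ := exists_prefix_first_hit W T hx
  refine ⟨f, hf, Q, ?_, hQ, ?_, ?_⟩
  · rw [hW]; exact Walk.subset_support_append_left _ _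
  · intro hp; rw [hW] at hp; exact hp.of_append_left
  · rw [hW, Walk.length_append]; omega

lemma exists_suffix_last_hit {u v : V} (W : G.Walk u v) (T : Set V)
    (hx : ∃ x ∈ W.support, x ∈ T) :
    ∃ z, z ∈ T ∧ ∃ (R : G.Walk z v), R.support ⊆ W.support ∧
      (∀ x ∈ R.support, x ∈ T → x = z) ∧ (W.IsPath → R.IsPath) := by
  have hx' : ∃ x ∈ W.reverse.support, x ∈ T := by
    obtain ⟨x, hxs, hxT⟩ := hx
    exact ⟨x, by simpa [Walk.support_reverse] using hxs, hxT⟩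
  obtain ⟨f, hf, Q, hsub, hQ, hpath, _⟩ := exists_prefix_first_hit' W.reverse T hx'
  refine ⟨f, hf, Q.reverse, ?_, ?_, ?_⟩
  · intro x hxs
    have : x ∈ Q.support := by simpa [Walk.support_reverse] using hxs
    have := hsub this
    simpa [Walk.support_reverse] using this
  · intro x hxs hxT
    exact hQ x (by simpa [Walk.support_reverse] using hxs) hxT
  · intro hp
    exact (hpath hp.reverse).reverse

/-- Extract from a walk from `S` to `H` a sub-path meeting `S` only in its first
vertex and `H` only in its last vertex. -/
lemma extract_segment {σ h : V} (W : G.Walk σ h) (S H : Set V)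
    (hσ : σ ∈ S) (hh : h ∈ H) (_hdisj : ∀ x, x ∈ S → x ∈ H → False) :
    ∃ y f, y ∈ S ∧ f ∈ H ∧ ∃ (seg : G.Walk y f), seg.support ⊆ W.support ∧
      (∀ x ∈ seg.support, x ∈ S → x = y) ∧ (∀ x ∈ seg.support, x ∈ H → x = f) ∧
      (W.IsPath → seg.IsPath) := by
  obtain ⟨f, hf, Q, hsub, hQ, hpath, _⟩ :=
    exists_prefix_first_hit' W H ⟨h, W.end_mem_support, hh⟩
  obtain ⟨y, hy, R, hsub2, hR, hpath2⟩ :=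
    exists_suffix_last_hit Q S ⟨σ, Q.start_mem_support, hσ⟩
  refine ⟨y, f, hy, hf, R, fun x hx => hsub (hsub2 hx), hR, ?_, fun hp => hpath2 (hpath hp)⟩
  intro x hxs hxH
  exact hQ x (hsub2 hxs) hxH

/-- From connectivity of `G - c`, get a walk avoiding `c`. -/
lemma walk_avoiding (hdel : ∀ c : V, (G.induce ({c}ᶜ : Set V)).Connected)
    {u v c : V} (hu : u ≠ c) (hv : v ≠ c) :
    ∃ W : G.Walk u v, W.IsPath ∧ ∀ x ∈ W.support, x ≠ c := by
  have hr : (G.induce ({c}ᶜ : Set V)).Reachable ⟨u, hu⟩ ⟨v, hv⟩ := (hdel c).preconnected _ _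
  obtain ⟨W0⟩ := hr
  let fhom : G.induce ({c}ᶜ : Set V) →g G := ⟨Subtype.val, fun {a b} hab => hab⟩
  let W1 : G.Walk u v := W0.map fhom
  refine ⟨W1.bypass, W1.bypass_isPath, ?_⟩
  intro x hx
  have hx' : x ∈ W1.support := W1.support_bypass_subset hx
  rw [Walk.support_map] at hx'
  obtain ⟨⟨x', hx'c⟩, _, rfl⟩ := List.mem_map.mp hx'
  exact hx'c

/-- Insert a vertex `w` adjacent to two consecutive vertices of a path. -/
lemma insert_vertex {s t : V} (p : G.Walk s t) (hp : p.IsPath) {w : V}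
    (hw : w ∉ p.support) :
    ∀ i, i < p.length → G.Adj (p.getVert i) w → G.Adj w (p.getVert (i + 1)) →
    ∃ q : G.Walk s t, q.IsPath ∧ q.length = p.length + 1 ∧
      ∀ x ∈ q.support, x ∈ p.support ∨ x = w := by
  induction p with
  | nil => intro i hi; simp at hi
  | @cons a b c h rest ih =>
    intro i hi h1 h2
    cases i with
    | zero =>
      have hga : (Walk.cons h rest).getVert 0 = a := Walk.getVert_zero _
      have hgb : (Walk.cons h rest).getVert 1 = b := by
        rw [Walk.getVert_cons_succ]; exact Walk.getVert_zero _
      rw [hga] at h1; rw [hgb] at h2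
      have hrest : rest.IsPath := hp.of_cons
      have haw : a ≠ w := fun hh => hw (hh ▸ Walk.start_mem_support _)
      have hwrest : w ∉ rest.support := fun hh => hw (by simp [hh])
      have harest : a ∉ rest.support := ((Walk.cons_isPath_iff h rest).mp hp).2
      refine ⟨Walk.cons h1 (Walk.cons h2 rest), ?_, by simp, ?_⟩
      · refine (hrest.cons hwrest).cons ?_
        simp only [Walk.support_cons, List.mem_cons]
        rintro (rfl | hh)
        · exact haw rfl
        · exact harest hh
      · intro x hx
        simp only [Walk.support_cons, List.mem_cons] at hx ⊢
        rcases hx with rfl | rfl | hx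
        · exact Or.inl (Or.inl rfl)
        · exact Or.inr rfl
        · exact Or.inl (Or.inr hx)
    | succ i =>
      have hrest : rest.IsPath := hp.of_cons
      have hwrest : w ∉ rest.support := fun hh => hw (by simp [hh])
      have hi' : i < rest.length := by simpa using hi
      have h1' : G.Adj (rest.getVert i) w := by rwa [Walk.getVert_cons_succ] at h1
      have h2' : G.Adj w (rest.getVert (i + 1)) := by rwa [Walk.getVert_cons_succ] at h2
      obtain ⟨q, hq, hlen, hsup⟩ := ih hrest hwrest i hi' h1' h2'
      have haq : a ∉ q.support := by
        intro hh
        rcases hsup a hh with h3 | h3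
        · exact ((Walk.cons_isPath_iff h rest).mp hp).2 h3
        · exact hw (by simp [h3])
      refine ⟨Walk.cons h q, hq.cons haq, by simp [hlen], ?_⟩
      intro x hx
      simp only [Walk.support_cons, List.mem_cons] at hx ⊢
      rcases hx with rfl | hx
      · exact Or.inl (Or.inl rfl)
      · rcases hsup x hx with h3 | h3
        · exact Or.inl (Or.inr h3)
        · exact Or.inr h3

end StmtAux

namespace StmtAux

open SimpleGraph Walk

variable {V : Type*} [DecidableEq V] {G : SimpleGraph V}

lemma end_not_mem_takeUntil {u v z : V} {P : G.Walk u v} (hP : P.IsPath)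
    (hz : z ∈ P.support) (hne : z ≠ v) : v ∉ (P.takeUntil z hz).support := by
  intro hmem
  have hspec := P.take_spec hz
  have hnd : ((P.takeUntil z hz).append (P.dropUntil z hz)).IsPath := by rwa [hspec]
  rw [Walk.isPath_def, Walk.support_append] at hnd
  have hdisj := List.disjoint_of_nodup_append hnd
  have hvd : v ∈ (P.dropUntil z hz).support.tail := by
    have h1 : v ∈ (P.dropUntil z hz).support := Walk.end_mem_support _
    have h2 : (P.dropUntil z hz).support = z :: (P.dropUntil z hz).support.tail :=
      Walk.support_eq_cons _
    rw [h2] at h1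
    rcases List.mem_cons.mp h1 with h3 | h3
    · exact absurd h3.symm hne
    · exact h3
  exact hdisj hmem hvd

lemma mem_takeUntil_and_dropUntil {u v z x : V} {P : G.Walk u v} (hP : P.IsPath)
    (hz : z ∈ P.support) (h1 : x ∈ (P.takeUntil z hz).support)
    (h2 : x ∈ (P.dropUntil z hz).support) : x = z := by
  by_contra hne
  have hspec := P.take_spec hz
  have hnd : ((P.takeUntil z hz).append (P.dropUntil z hz)).IsPath := by rwa [hspec]
  rw [Walk.isPath_def, Walk.support_append] at hnd
  have hdisj := List.disjoint_of_nodup_append hnd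
  have hxd : x ∈ (P.dropUntil z hz).support.tail := by
    have hc : (P.dropUntil z hz).support = z :: (P.dropUntil z hz).support.tail :=
      Walk.support_eq_cons _
    rw [hc] at h2
    rcases List.mem_cons.mp h2 with h3 | h3
    · exact absurd h3 hne
    · exact h3
  exact hdisj h1 hxd

end StmtAux
namespace StmtAux
open SimpleGraph Walk
variable {V : Type*} [DecidableEq V] {G : SimpleGraph V}
set_option linter.unusedSectionVars false
set_option maxHeartbeats 1000000

lemma fan_step (hdel : ∀ c : V, (G.induce ({c}ᶜ : Set V)).Connected)
    {T : Set V} {u y f b' : V}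
    (huT : u ∉ T) (hyT : y ∉ T) (hfT : f ∈ T) (hfy : f ≠ y)
    (ht2 : ∃ t1 t2, t1 ∈ T ∧ t2 ∈ T ∧ t1 ≠ t2)
    (hadj : G.Adj y f) (hb' : b' ∈ T)
    (A' : G.Walk u y) (B' : G.Walk u b')
    (hA : A'.IsPath) (hB : B'.IsPath)
    (hAT : ∀ x ∈ A'.support, x ∈ T ∪ {y} → x = y)
    (hBT : ∀ x ∈ B'.support, x ∈ T ∪ {y} → x = b')
    (hABd : ∀ x ∈ A'.support, x ∈ B'.support → x = u) :
    ∃ a b, a ∈ T ∧ b ∈ T ∧ a ≠ b ∧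
      ∃ (A : G.Walk u a) (B : G.Walk u b), A.IsPath ∧ B.IsPath ∧
        (∀ x ∈ A.support, x ∈ T → x = a) ∧
        (∀ x ∈ B.support, x ∈ T → x = b) ∧
        (∀ x ∈ A.support, x ∈ B.support → x = u) := by
  have hfA : f ∉ A'.support := fun hmem => hfy (hAT f hmem (Or.inl hfT))
  have huf : u ≠ f := fun h => huT (h ▸ hfT)
  have hyf_path : (Walk.cons hadj (Walk.nil : G.Walk f f)).IsPath := by
    apply Walk.IsPath.cons Walk.IsPath.nil
    simp [hfy.symm, hadj.ne]
  have hsupA : (A'.append (Walk.cons hadj Walk.nil)).support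
      = A'.support ++ [f] := by
    rw [Walk.support_append]; simp
  have hApath : (A'.append (Walk.cons hadj Walk.nil)).IsPath := by
    apply isPath_append_inter hA hyf_path
    intro x hx1 hx2
    have hx2' : x = y ∨ x = f := by simpa using hx2
    rcases hx2' with rfl | rfl
    · rfl
    · exact absurd hx1 hfA
  by_cases hfB : f ∈ B'.support
  · -- f = b'
    have hfb' : f = b' := hBT f hfB (Or.inl hfT)
    subst hfb'
    obtain ⟨t1, t2, ht1, ht2', hne12⟩ := ht2
    obtain ⟨τ, hτT, hτf⟩ : ∃ τ, τ ∈ T ∧ τ ≠ f := by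
      by_cases h1 : t1 = f
      · exact ⟨t2, ht2', fun h => hne12 (h1 ▸ h ▸ rfl)⟩
      · exact ⟨t1, ht1, h1⟩
    obtain ⟨B0, hB0path, hB0av⟩ := walk_avoiding hdel huf hτf
    obtain ⟨b'', hb''T, B'', hB''sub, hB''T, hB''path', _⟩ :=
      exists_prefix_first_hit' B0 T ⟨τ, B0.end_mem_support, hτT⟩
    have hB''path : B''.IsPath := hB''path' hB0path
    have hB''av : ∀ x ∈ B''.support, x ≠ f := fun x hx => hB0av x (hB''sub hx)
    have hb''f : b'' ≠ f := hB''av b'' B''.end_mem_support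
    set Oset : Set V := {x | x ∈ A'.support ∨ x ∈ B'.support} with hOset
    obtain ⟨z, hzO, R, hRsub, hRO, hRpath'⟩ :=
      exists_suffix_last_hit B'' Oset
        ⟨u, B''.start_mem_support, Or.inl A'.start_mem_support⟩
    have hRpath : R.IsPath := hRpath' hB''path
    have hzf : z ≠ f := hB''av z (hRsub R.start_mem_support)
    have hRT : ∀ x ∈ R.support, x ∈ T → x = b'' := fun x hx hxT =>
      hB''T x (hRsub hx) hxT
    have hRavf : ∀ x ∈ R.support, x ≠ f := fun x hx => hB''av x (hRsub hx)
    by_cases hzA : z ∈ A'.support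
    · -- use B' as path to f, and (A'.takeUntil z) ++ R as path to b''
      have hfb'' : f ≠ b'' := fun h => hb''f h.symm
      set tk := A'.takeUntil z hzA with htk
      have htkpath : tk.IsPath := hA.takeUntil hzA
      have htksub : tk.support ⊆ A'.support := Walk.support_takeUntil_subset _ hzA
      have hBnew : (tk.append R).IsPath := by
        apply isPath_append_inter htkpath hRpath
        intro x hx1 hx2
        exact hRO x hx2 (Or.inl (htksub hx1))
      refine ⟨f, b'', hfT, hb''T, hfb'', B', tk.append R, hB, hBnew, ?_, ?_, ?_⟩
      · intro x hx hxT
        exact hBT x hx (Or.inl hxT)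
      · intro x hx hxT
        rw [Walk.mem_support_append_iff] at hx
        rcases hx with hx | hx
        · exact absurd ((hAT x (htksub hx) (Or.inl hxT)) ▸ hxT) hyT
        · exact hRT x hx hxT
      · intro x hxB' hx
        rw [Walk.mem_support_append_iff] at hx
        rcases hx with hx | hx
        · exact hABd x (htksub hx) hxB'
        · have hxz : x = z := hRO x hx (Or.inr hxB')
          subst hxz
          exact hABd x hzA hxB'
    · -- z ∈ B' ; use A' ++ edge yf as path to f, and (B'.takeUntil z) ++ R to b''
      have hzB : z ∈ B'.support := by
        rcases hzO with h | h
        · exact absurd h hzA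
        · exact h
      have hfb'' : f ≠ b'' := fun h => hb''f h.symm
      set tk := B'.takeUntil z hzB with htk
      have htkpath : tk.IsPath := hB.takeUntil hzB
      have htksub : tk.support ⊆ B'.support := Walk.support_takeUntil_subset _ hzB
      have hftk : f ∉ tk.support := end_not_mem_takeUntil hB hzB hzf
      have hBnew : (tk.append R).IsPath := by
        apply isPath_append_inter htkpath hRpath
        intro x hx1 hx2
        exact hRO x hx2 (Or.inr (htksub hx1))
      refine ⟨f, b'', hfT, hb''T, hfb'',
        A'.append (Walk.cons hadj Walk.nil), tk.append R, hApath, hBnew, ?_, ?_, ?_⟩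
      · intro x hx hxT
        rw [hsupA, List.mem_append] at hx
        rcases hx with hx | hx
        · exact absurd ((hAT x hx (Or.inl hxT)) ▸ hxT) hyT
        · simpa using hx
      · intro x hx hxT
        rw [Walk.mem_support_append_iff] at hx
        rcases hx with hx | hx
        · have hxf := hBT x (htksub hx) (Or.inl hxT)
          exact absurd (hxf ▸ hx) hftk
        · exact hRT x hx hxT
      · intro x hxA hx
        rw [hsupA, List.mem_append] at hxA
        rw [Walk.mem_support_append_iff] at hx
        rcases hxA with hxA | hxA
        · rcases hx with hx | hx
          · exact hABd x hxA (htksub hx)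
          · have hxz : x = z := hRO x hx (Or.inl hxA)
            exact absurd (hxz ▸ hxA) hzA
        · have hxf : x = f := by simpa using hxA
          subst hxf
          rcases hx with hx | hx
          · exact absurd hx hftk
          · exact absurd rfl (hRavf x hx)
  · -- easy case : f ∉ B'
    refine ⟨f, b', hfT, hb', fun h => hfB (h ▸ B'.end_mem_support),
      A'.append (Walk.cons hadj Walk.nil), B', hApath, hB, ?_, ?_, ?_⟩
    · intro x hx hxT
      rw [hsupA, List.mem_append] at hx
      rcases hx with hx | hx
      · exact absurd ((hAT x hx (Or.inl hxT)) ▸ hxT) hyT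
      · simpa using hx
    · intro x hx hxT
      exact hBT x hx (Or.inl hxT)
    · intro x hxA hxB
      rw [hsupA, List.mem_append] at hxA
      rcases hxA with hxA | hxA
      · exact hABd x hxA hxB
      · have hxf : x = f := by simpa using hxA
        exact absurd (hxf ▸ hxB) hfB


lemma fan_base (hdel : ∀ c : V, (G.induce ({c}ᶜ : Set V)).Connected)
    {T : Set V} {u f : V} (huT : u ∉ T) (hfT : f ∈ T)
    (ht2 : ∃ t1 t2, t1 ∈ T ∧ t2 ∈ T ∧ t1 ≠ t2) (hadj : G.Adj u f) :
    ∃ a b, a ∈ T ∧ b ∈ T ∧ a ≠ b ∧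
      ∃ (A : G.Walk u a) (B : G.Walk u b), A.IsPath ∧ B.IsPath ∧
        (∀ x ∈ A.support, x ∈ T → x = a) ∧
        (∀ x ∈ B.support, x ∈ T → x = b) ∧
        (∀ x ∈ A.support, x ∈ B.support → x = u) := by
  have huf : u ≠ f := hadj.ne
  obtain ⟨t1, t2, ht1, ht2', hne12⟩ := ht2
  obtain ⟨τ, hτT, hτf⟩ : ∃ τ, τ ∈ T ∧ τ ≠ f := by
    by_cases h1 : t1 = f
    · exact ⟨t2, ht2', fun h => hne12 (h1 ▸ h ▸ rfl)⟩
    · exact ⟨t1, ht1, h1⟩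
  obtain ⟨B0, hB0path, hB0av⟩ := walk_avoiding hdel huf hτf
  obtain ⟨b, hbT, Bw, hBsub, hBT, hBpath', _⟩ :=
    exists_prefix_first_hit' B0 T ⟨τ, B0.end_mem_support, hτT⟩
  have hBpath : Bw.IsPath := hBpath' hB0path
  have hBav : ∀ x ∈ Bw.support, x ≠ f := fun x hx => hB0av x (hBsub hx)
  have hbf : b ≠ f := hBav b Bw.end_mem_support
  have hApath : (Walk.cons hadj (Walk.nil : G.Walk f f)).IsPath := by
    apply Walk.IsPath.cons Walk.IsPath.nil
    simp [huf]
  refine ⟨f, b, hfT, hbT, fun h => hbf h.symm, Walk.cons hadj Walk.nil, Bw,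
    hApath, hBpath, ?_, hBT, ?_⟩
  · intro x hx hxT
    have hx' : x = u ∨ x = f := by simpa using hx
    rcases hx' with h | h
    · exact absurd (h ▸ hxT) huT
    · exact h
  · intro x hx hxB
    have hx' : x = u ∨ x = f := by simpa using hx
    rcases hx' with h | h
    · exact h
    · exact absurd (h ▸ hxB) (fun hm => hBav f hm rfl)

lemma fan_aux (hdel : ∀ c : V, (G.induce ({c}ᶜ : Set V)).Connected) :
    ∀ k : ℕ, ∀ (T : Set V) (u : V), u ∉ T →
    (∃ t1 t2, t1 ∈ T ∧ t2 ∈ T ∧ t1 ≠ t2) →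
    (∃ τ, τ ∈ T ∧ ∃ W : G.Walk u τ, W.length ≤ k) →
    ∃ a b, a ∈ T ∧ b ∈ T ∧ a ≠ b ∧
      ∃ (A : G.Walk u a) (B : G.Walk u b), A.IsPath ∧ B.IsPath ∧
        (∀ x ∈ A.support, x ∈ T → x = a) ∧
        (∀ x ∈ B.support, x ∈ T → x = b) ∧
        (∀ x ∈ A.support, x ∈ B.support → x = u) := by
  intro k
  induction k with
  | zero =>
    rintro T u huT ht2 ⟨τ, hτ, W, hW⟩
    have : u = τ := Walk.eq_of_length_eq_zero (Nat.le_zero.mp hW)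
    exact absurd (this ▸ hτ) huT
  | succ k ih =>
    rintro T u huT ht2 ⟨τ, hτ, W, hW⟩
    obtain ⟨f, hfT, Q, hQsub, hQT, hQpath', hQlen⟩ :=
      exists_prefix_first_hit' W.bypass T ⟨τ, Walk.end_mem_support _, hτ⟩
    have hQpath : Q.IsPath := hQpath' W.bypass_isPath
    have hQlen' : Q.length ≤ k + 1 :=
      le_trans hQlen (le_trans (Walk.length_bypass_le W) hW)
    have huf : u ≠ f := fun h => huT (h ▸ hfT)
    by_cases hQ0 : Q.length = 0
    · exact absurd (Walk.eq_of_length_eq_zero hQ0) huf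
    by_cases hQ1 : Q.length = 1
    · have hadj : G.Adj u f := by
        have h01 := Q.adj_getVert_succ (i := 0) (by omega)
        rw [Walk.getVert_zero] at h01
        have : Q.getVert 1 = f := by
          have := Q.getVert_length
          rwa [hQ1] at this
        rwa [this] at h01
      exact fan_base hdel huT hfT ht2 hadj
    -- length ≥ 2
    obtain ⟨y, hadj, R0, hQr⟩ := Walk.exists_eq_cons_of_ne huf.symm Q.reverse
    set Q₀ : G.Walk u y := R0.reverse with hQ₀
    have hQeq : Q = Q₀.append (Walk.cons hadj.symm Walk.nil) := by
      have h1 : Q.reverse.reverse = (Walk.cons hadj R0).reverse := by rw [hQr]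
      rw [Walk.reverse_reverse, Walk.reverse_cons] at h1
      exact h1
    have hQsupp : Q.support = Q₀.support ++ [f] := by
      rw [hQeq, Walk.support_append]
      simp
    have hQ₀path : Q₀.IsPath := by
      rw [hQeq] at hQpath; exact hQpath.of_append_left
    have hfQ₀ : f ∉ Q₀.support := by
      intro hmem
      have := hQpath.support_nodup
      rw [hQsupp] at this
      exact (List.disjoint_of_nodup_append this) hmem (by simp)
    have hQ₀len : Q₀.length ≤ k := by
      have : Q.length = Q₀.length + 1 := by
        rw [hQeq, Walk.length_append]; simp
      omega
    have hyQ₀ : y ∈ Q₀.support := Walk.end_mem_support _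
    have hyT : y ∉ T := by
      intro hyT
      have : y = f := hQT y (by rw [hQsupp]; exact List.mem_append_left _ hyQ₀) hyT
      exact hfQ₀ (this ▸ hyQ₀)
    have hfy : f ≠ y := fun h => hfQ₀ (h ▸ hyQ₀)
    by_cases hxy : u = y
    · exact fan_base hdel huT hfT ht2 (by rw [hxy]; exact hadj.symm)
    · obtain ⟨t1, t2, ht1, ht2', hne12⟩ := ht2
      have ihres := ih (T ∪ {y}) u
        (by
          intro h
          rcases h with h | h
          · exact huT h
          · exact hxy (by simpa using h))
        ⟨t1, t2, Or.inl ht1, Or.inl ht2', hne12⟩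
        ⟨y, Or.inr rfl, Q₀, hQ₀len⟩
      obtain ⟨a', b', ha', hb', hne', A', B', hA'p, hB'p, hAT, hBT, hABd⟩ := ihres
      have hsplit : ∀ c : V, c ∈ T ∪ ({y} : Set V) → c ∈ T ∨ c = y := by
        intro c hc
        rcases hc with hc | hc
        · exact Or.inl hc
        · exact Or.inr (by simpa using hc)
      rcases hsplit a' ha' with haT | hay
      · rcases hsplit b' hb' with hbT | hby
        · exact ⟨a', b', haT, hbT, hne', A', B', hA'p, hB'p,
            (fun x hx hxT => hAT x hx (Or.inl hxT)),
            (fun x hx hxT => hBT x hx (Or.inl hxT)), hABd⟩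
        · subst hby
          exact fan_step hdel huT hyT hfT hfy ⟨t1, t2, ht1, ht2', hne12⟩
            hadj.symm haT B' A' hB'p hA'p hBT hAT
            (fun x hx1 hx2 => hABd x hx2 hx1)
      · subst hay
        have hbT : b' ∈ T := by
          rcases hsplit b' hb' with h | h
          · exact h
          · exact absurd h.symm hne'
        exact fan_step hdel huT hyT hfT hfy ⟨t1, t2, ht1, ht2', hne12⟩
          hadj.symm hbT A' B' hA'p hB'p hAT hBT hABd


lemma mem_reverse_support {u v x : V} (p : G.Walk u v) :
    x ∈ p.reverse.support ↔ x ∈ p.support := by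
  rw [Walk.support_reverse]; exact List.mem_reverse

/-- Two disjoint `S`–`H` segments. -/
def PairSH (G : SimpleGraph V) (S H : Set V) : Prop :=
  ∃ y1 y2 f1 f2, y1 ∈ S ∧ y2 ∈ S ∧ y1 ≠ y2 ∧ f1 ∈ H ∧ f2 ∈ H ∧ f1 ≠ f2 ∧
    ∃ (sg1 : G.Walk y1 f1) (sg2 : G.Walk y2 f2), sg1.IsPath ∧ sg2.IsPath ∧
      (∀ x ∈ sg1.support, x ∈ S → x = y1) ∧ (∀ x ∈ sg1.support, x ∈ H → x = f1) ∧
      (∀ x ∈ sg2.support, x ∈ S → x = y2) ∧ (∀ x ∈ sg2.support, x ∈ H → x = f2) ∧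
      (∀ x ∈ sg1.support, x ∈ sg2.support → False)

lemma build_pair {S H : Set V} (hdisj : ∀ x, x ∈ S → x ∈ H → False)
    {w a b : V} (hw : w ∈ H) (haS : a ∈ S) (hbS : b ∈ S) (hab : a ≠ b)
    (A : G.Walk w a) (B : G.Walk w b) (hA : A.IsPath) (hB : B.IsPath)
    (hAS : ∀ x ∈ A.support, x ∈ S → x = a) (hBS : ∀ x ∈ B.support, x ∈ S → x = b)
    (hABd : ∀ x ∈ A.support, x ∈ B.support → x = w)
    (hAH : ∀ x ∈ A.support, x ∈ H → x = w) (hBH : ∀ x ∈ B.support, x ∈ H → x = w)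
    {c f_c : V} (segC : G.Walk c f_c) (hcS : c ∈ S) (hfcH : f_c ∈ H)
    (hCpath : segC.IsPath)
    (hCS : ∀ x ∈ segC.support, x ∈ S → x = c)
    (hCH : ∀ x ∈ segC.support, x ∈ H → x = f_c)
    (hCw : ∀ x ∈ segC.support, x ≠ w)
    {z : V} (hzA : z ∈ A.support)
    (Rc : G.Walk z f_c) (hRcsub : Rc.support ⊆ segC.support)
    (hRcO : ∀ x ∈ Rc.support, (x ∈ A.support ∨ x ∈ B.support) → x = z)
    (hRcpath : Rc.IsPath) :
    PairSH G S H := by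
  have hzw : z ≠ w := hCw z (hRcsub Rc.start_mem_support)
  have hzA' : z ∈ A.reverse.support := (mem_reverse_support A).mpr hzA
  set tkz := A.reverse.takeUntil z hzA' with htkz
  have htkzpath : tkz.IsPath := hA.reverse.takeUntil hzA'
  have htkzsub : ∀ x ∈ tkz.support, x ∈ A.support := fun x hx =>
    (mem_reverse_support A).mp (Walk.support_takeUntil_subset _ hzA' hx)
  have hwtkz : w ∉ tkz.support := end_not_mem_takeUntil hA.reverse hzA' hzw
  have hNEWpath : (tkz.append Rc).IsPath := by
    apply isPath_append_inter htkzpath hRcpath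
    intro x hx1 hx2
    exact hRcO x hx2 (Or.inl (htkzsub x hx1))
  obtain ⟨y', f', hy'S, hf'H, segN, subN, hNS, hNH, pathN'⟩ :=
    extract_segment (tkz.append Rc) S H haS hfcH hdisj
  have pathN : segN.IsPath := pathN' hNEWpath
  have hcases : ∀ x ∈ segN.support, x ∈ tkz.support ∨ x ∈ Rc.support := by
    intro x hx
    exact (Walk.mem_support_append_iff _ _).mp (subN hx)
  have hy'b : y' ≠ b := by
    intro h
    rcases hcases y' segN.start_mem_support with hx | hx
    · exact hab ((hAS y' (htkzsub y' hx) hy'S) ▸ h ▸ rfl)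
    · have hz' : y' = z := hRcO y' hx (Or.inr (h ▸ B.end_mem_support))
      have hbA : b ∈ A.support := by rw [← h, hz']; exact hzA
      exact hab (hAS b hbA hbS).symm
  have hf'w : f' ≠ w := by
    intro h
    rcases hcases f' segN.end_mem_support with hx | hx
    · exact hwtkz (h ▸ hx)
    · exact hCw f' (hRcsub hx) h
  have hdisjN : ∀ x ∈ segN.support, x ∈ B.support → False := by
    intro x hx hxB
    rcases hcases x hx with h1 | h1
    · have : x = w := hABd x (htkzsub x h1) hxB
      exact hwtkz (this ▸ h1)
    · have hxz : x = z := hRcO x h1 (Or.inr hxB)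
      have : z = w := hABd z hzA (hxz ▸ hxB)
      exact hzw this
  refine ⟨b, y', w, f', hbS, hy'S, fun h => hy'b h.symm, hw, hf'H,
    fun h => hf'w h.symm, B.reverse, segN, hB.reverse, pathN, ?_, ?_, hNS, hNH, ?_⟩
  · intro x hx hxS
    exact hBS x ((mem_reverse_support B).mp hx) hxS
  · intro x hx hxH
    exact hBH x ((mem_reverse_support B).mp hx) hxH
  · intro x hx1 hx2
    exact hdisjN x hx2 ((mem_reverse_support B).mp hx1)


lemma two_disjoint_SH (hdel : ∀ c : V, (G.induce ({c}ᶜ : Set V)).Connected)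
    (hconn : G.Connected) {S H : Set V}
    (hdisj : ∀ x, x ∈ S → x ∈ H → False)
    (hS2 : ∃ s1 s2, s1 ∈ S ∧ s2 ∈ S ∧ s1 ≠ s2)
    {w w' : V} (hw : w ∈ H) (hw' : w' ∈ H) (hww' : w ≠ w') :
    PairSH G S H := by
  obtain ⟨s1, s2, hs1, hs2, hs12⟩ := hS2
  have hwS : w ∉ S := fun h => hdisj w h hw
  obtain ⟨W0⟩ := hconn.preconnected w s1
  obtain ⟨a, b, haS, hbS, hab, A, B, hApath, hBpath, hAS', hBS', hABd'⟩ :=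
    fan_aux hdel W0.length S w hwS ⟨s1, s2, hs1, hs2, hs12⟩ ⟨s1, hs1, W0, le_refl _⟩
  -- analyse A side
  obtain ⟨fA, hfAH, QA, RA, hQRA, hQAH⟩ :=
    exists_prefix_first_hit A.reverse H ⟨w, A.reverse.end_mem_support, hw⟩
  have hQApath : QA.IsPath := by
    have := hApath.reverse
    rw [hQRA] at this
    exact this.of_append_left
  have hRApath : RA.IsPath := by
    have := hApath.reverse
    rw [hQRA] at this
    exact this.of_append_right
  have hQAsubA : ∀ x ∈ QA.support, x ∈ A.support := by
    intro x hx
    have : x ∈ (QA.append RA).support := (Walk.mem_support_append_iff _ _).mpr (Or.inl hx)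
    rw [← hQRA] at this
    exact (mem_reverse_support A).mp this
  obtain ⟨yA, hyAS, segA, hsegAsub, hsegAS, hsegApath'⟩ :=
    exists_suffix_last_hit QA S ⟨a, QA.start_mem_support, haS⟩
  have hsegApath : segA.IsPath := hsegApath' hQApath
  have hyAa : yA = a := hAS' yA (hQAsubA yA (hsegAsub segA.start_mem_support)) hyAS
  have hsegAH : ∀ x ∈ segA.support, x ∈ H → x = fA := fun x hx hxH =>
    hQAH x (hsegAsub hx) hxH
  have hsegAsubA : ∀ x ∈ segA.support, x ∈ A.support := fun x hx =>
    hQAsubA x (hsegAsub hx)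
  -- analyse B side
  obtain ⟨fB, hfBH, QB, RB, hQRB, hQBH⟩ :=
    exists_prefix_first_hit B.reverse H ⟨w, B.reverse.end_mem_support, hw⟩
  have hQBpath : QB.IsPath := by
    have := hBpath.reverse
    rw [hQRB] at this
    exact this.of_append_left
  have hRBpath : RB.IsPath := by
    have := hBpath.reverse
    rw [hQRB] at this
    exact this.of_append_right
  have hQBsubB : ∀ x ∈ QB.support, x ∈ B.support := by
    intro x hx
    have : x ∈ (QB.append RB).support := (Walk.mem_support_append_iff _ _).mpr (Or.inl hx)
    rw [← hQRB] at this
    exact (mem_reverse_support B).mp this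
  obtain ⟨yB, hyBS, segB, hsegBsub, hsegBS, hsegBpath'⟩ :=
    exists_suffix_last_hit QB S ⟨b, QB.start_mem_support, hbS⟩
  have hsegBpath : segB.IsPath := hsegBpath' hQBpath
  have hyBb : yB = b := hBS' yB (hQBsubB yB (hsegBsub segB.start_mem_support)) hyBS
  have hsegBH : ∀ x ∈ segB.support, x ∈ H → x = fB := fun x hx hxH =>
    hQBH x (hsegBsub hx) hxH
  have hsegBsubB : ∀ x ∈ segB.support, x ∈ B.support := fun x hx =>
    hQBsubB x (hsegBsub hx)
  by_cases hff : fA = fB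
  · -- bad case : fA = fB = w
    have hfAA : fA ∈ A.support := hQAsubA fA QA.end_mem_support
    have hfBB : fB ∈ B.support := hQBsubB fB QB.end_mem_support
    have hfAw : fA = w := hABd' fA hfAA (hff ▸ hfBB)
    have hfAw' := hfAw.symm
    subst hfAw'
    subst hff
    have hAH : ∀ x ∈ A.support, x ∈ H → x = w := by
      intro x hx hxH
      have hx' : x ∈ (QA.append RA).support := by
        rw [← hQRA]; exact (mem_reverse_support A).mpr hx
      rcases (Walk.mem_support_append_iff _ _).mp hx' with h1 | h1
      · exact hQAH x h1 hxH
      · have : RA = Walk.nil := (Walk.isPath_iff_eq_nil (p := RA)).mp hRApath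
        rw [this] at h1
        simpa using h1
    have hBH : ∀ x ∈ B.support, x ∈ H → x = w := by
      intro x hx hxH
      have hx' : x ∈ (QB.append RB).support := by
        rw [← hQRB]; exact (mem_reverse_support B).mpr hx
      rcases (Walk.mem_support_append_iff _ _).mp hx' with h1 | h1
      · exact hQBH x h1 hxH
      · have : RB = Walk.nil := (Walk.isPath_iff_eq_nil (p := RB)).mp hRBpath
        rw [this] at h1
        simpa using h1
    have hs1w : s1 ≠ w := fun h => hdisj s1 hs1 (h ▸ hw)
    obtain ⟨P3, hP3path, hP3av⟩ := walk_avoiding hdel hs1w hww'.symm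
    obtain ⟨c, f_c, hcS, hfcH, segC, hCsub, hCS, hCH, hCpath'⟩ :=
      extract_segment P3 S H hs1 hw' hdisj
    have hCpath : segC.IsPath := hCpath' hP3path
    have hCw : ∀ x ∈ segC.support, x ≠ w := fun x hx => hP3av x (hCsub hx)
    by_cases hint : ∃ x ∈ segC.support, x ∈ A.support ∨ x ∈ B.support
    · obtain ⟨z, hzO, Rc, hRcsub, hRcO', hRcpath'⟩ :=
        exists_suffix_last_hit segC {x | x ∈ A.support ∨ x ∈ B.support} hint
      have hRcpath : Rc.IsPath := hRcpath' hCpath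
      have hRcO : ∀ x ∈ Rc.support, (x ∈ A.support ∨ x ∈ B.support) → x = z :=
        fun x hx h => hRcO' x hx h
      rcases hzO with hzA | hzB
      · exact build_pair hdisj hw haS hbS hab A B hApath hBpath hAS' hBS' hABd'
          hAH hBH segC hcS hfcH hCpath hCS hCH hCw hzA Rc hRcsub hRcO hRcpath
      · exact build_pair hdisj hw hbS haS hab.symm B A hBpath hApath hBS' hAS'
          (fun x hx1 hx2 => hABd' x hx2 hx1) hBH hAH segC hcS hfcH hCpath hCS hCH hCw
          hzB Rc hRcsub (fun x hx h => hRcO x hx h.symm) hRcpath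
    · push_neg at hint
      have hfcw : f_c ≠ w := hCw f_c segC.end_mem_support
      by_cases hca : c = a
      · refine ⟨b, c, w, f_c, hbS, hcS, fun h => hab (h.trans hca).symm, hw, hfcH,
          fun h => hfcw h.symm, B.reverse, segC, hBpath.reverse, hCpath, ?_, ?_, hCS, hCH, ?_⟩
        · exact fun x hx hxS => hBS' x ((mem_reverse_support B).mp hx) hxS
        · exact fun x hx hxH => hBH x ((mem_reverse_support B).mp hx) hxH
        · intro x hx1 hx2
          exact (hint x hx2).2 ((mem_reverse_support B).mp hx1)
      · refine ⟨a, c, w, f_c, haS, hcS, fun h => hca h.symm, hw, hfcH,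
          fun h => hfcw h.symm, A.reverse, segC, hApath.reverse, hCpath, ?_, ?_, hCS, hCH, ?_⟩
        · exact fun x hx hxS => hAS' x ((mem_reverse_support A).mp hx) hxS
        · exact fun x hx hxH => hAH x ((mem_reverse_support A).mp hx) hxH
        · intro x hx1 hx2
          exact (hint x hx2).1 ((mem_reverse_support A).mp hx1)
  · -- good case : fA ≠ fB
    refine ⟨yA, yB, fA, fB, hyAS, hyBS, ?_, hfAH, hfBH, hff, segA, segB,
      hsegApath, hsegBpath, hsegAS, hsegAH, hsegBS, hsegBH, ?_⟩
    · rw [hyAa, hyBb]; exact hab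
    · intro x hx1 hx2
      have hxw : x = w := hABd' x (hsegAsubA x hx1) (hsegBsubB x hx2)
      have h1 : x = fA := hsegAH x hx1 (hxw ▸ hw)
      have h2 : x = fB := hsegBH x hx2 (hxw ▸ hw)
      exact hff (h1 ▸ h2)


section Connector

variable [Fintype V] [DecidableRel G.Adj]

lemma connector (Hf : Finset V) (L : ℕ)
    (hd : ∀ v ∈ Hf, L + 2 ≤ ((G.neighborFinset v) ∩ Hf).card)
    (hγ : ∀ u ∈ Hf, ∀ v ∈ Hf, u ≠ v →
      L + 2 ≤ ((G.neighborFinset u ∩ G.neighborFinset v) ∩ Hf).card) :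
    ∀ j (X : Finset V), (j + 2) + X.card + 1 ≤ L + 2 →
    ∀ u v, u ∈ Hf → v ∈ Hf → u ≠ v → u ∉ X → v ∉ X →
    ∃ P : G.Walk u v, P.IsPath ∧ P.length = j + 2 ∧ (∀ x ∈ P.support, x ∈ Hf) ∧
      ∀ x ∈ P.support, x ∉ X := by
  intro j
  induction j with
  | zero =>
    intro X hb u v hu hv huv huX hvX
    have hcard := hγ u hu v hv huv
    have hne : ((G.neighborFinset u ∩ G.neighborFinset v ∩ Hf) \ X).Nonempty := by
      rw [← Finset.card_pos]
      by_contra hcon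
      push_neg at hcon
      have hempty : (G.neighborFinset u ∩ G.neighborFinset v ∩ Hf) \ X = ∅ :=
        Finset.card_eq_zero.mp (Nat.le_zero.mp hcon)
      have hsub : G.neighborFinset u ∩ G.neighborFinset v ∩ Hf ⊆ X :=
        Finset.sdiff_eq_empty_iff_subset.mp hempty
      have := Finset.card_le_card hsub
      omega
    obtain ⟨x, hx⟩ := hne
    rw [Finset.mem_sdiff, Finset.mem_inter, Finset.mem_inter] at hx
    obtain ⟨⟨⟨hxu, hxv⟩, hxH⟩, hxX⟩ := hx
    have hadj1 : G.Adj u x := (SimpleGraph.mem_neighborFinset _ _ _).mp hxu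
    have hadj2 : G.Adj x v := ((SimpleGraph.mem_neighborFinset _ _ _).mp hxv).symm
    have hux : u ≠ x := hadj1.ne
    have hxv' : x ≠ v := hadj2.ne
    refine ⟨Walk.cons hadj1 (Walk.cons hadj2 Walk.nil), ?_, by simp, ?_, ?_⟩
    · apply Walk.IsPath.cons
      · apply Walk.IsPath.cons Walk.IsPath.nil
        simpa using hxv'
      · simp only [Walk.support_cons, Walk.support_nil, List.mem_cons, List.mem_singleton]
        rintro (rfl | h)
        · exact hux rfl
        · rcases h with rfl | h
          · exact huv rfl
          · simp at h
    · intro y hy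
      have : y = u ∨ y = x ∨ y = v := by simpa using hy
      rcases this with rfl | rfl | rfl <;> assumption
    · intro y hy
      have : y = u ∨ y = x ∨ y = v := by simpa using hy
      rcases this with rfl | rfl | rfl <;> assumption
  | succ j ih =>
    intro X hb u v hu hv huv huX hvX
    have hcard := hd u hu
    have hne : ((G.neighborFinset u ∩ Hf) \ (X ∪ {v})).Nonempty := by
      rw [← Finset.card_pos]
      by_contra hcon
      push_neg at hcon
      have hempty : (G.neighborFinset u ∩ Hf) \ (X ∪ {v}) = ∅ :=
        Finset.card_eq_zero.mp (Nat.le_zero.mp hcon)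
      have hsub : G.neighborFinset u ∩ Hf ⊆ X ∪ {v} :=
        Finset.sdiff_eq_empty_iff_subset.mp hempty
      have h1 := Finset.card_le_card hsub
      have h2 : (X ∪ {v}).card ≤ X.card + 1 := by
        apply le_trans (Finset.card_union_le _ _)
        simp
      omega
    obtain ⟨x, hx⟩ := hne
    rw [Finset.mem_sdiff, Finset.mem_inter, Finset.mem_union] at hx
    push_neg at hx
    obtain ⟨⟨hxu, hxH⟩, hxX, hxv⟩ := hx
    have hxv' : x ≠ v := by simpa using hxv
    have hadj1 : G.Adj u x := (SimpleGraph.mem_neighborFinset _ _ _).mp hxu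
    have hX' : (j + 2) + ((X ∪ {u}) : Finset V).card + 1 ≤ L + 2 := by
      have h2 : (X ∪ {u}).card ≤ X.card + 1 := by
        apply le_trans (Finset.card_union_le _ _)
        simp
      omega
    obtain ⟨P, hPpath, hPlen, hPH, hPX⟩ := ih (X ∪ {u}) hX' x v hxH hv hxv'
      (by simp [hxX, hadj1.ne']) (by simp [hvX, huv.symm])
    have huP : u ∉ P.support := fun h => hPX u h (by simp)
    refine ⟨Walk.cons hadj1 P, hPpath.cons huP, by simp [hPlen], ?_, ?_⟩
    · intro y hy
      rcases List.mem_cons.mp ((Walk.support_cons _ _) ▸ hy) with rfl | h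
      · exact hu
      · exact hPH y h
    · intro y hy
      rcases List.mem_cons.mp ((Walk.support_cons _ _) ▸ hy) with rfl | h
      · exact huX
      · exact fun hc => hPX y h (Finset.mem_union_left _ hc)

end Connector


lemma path_split_two {s t y1 y2 : V} (p : G.Walk s t)
    (h1 : y1 ∈ p.support) (h2 : y2 ∈ p.support) :
    ∃ (a b : V), ((a = y1 ∧ b = y2) ∨ (a = y2 ∧ b = y1)) ∧
      ∃ (pa : G.Walk s a) (mid : G.Walk a b) (pb : G.Walk b t),
        p = pa.append (mid.append pb) := by
  obtain ⟨q1, r1, hqr⟩ := Walk.mem_support_iff_exists_append.mp h1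
  have h2' : y2 ∈ q1.support ∨ y2 ∈ r1.support := by
    rw [hqr] at h2
    exact (Walk.mem_support_append_iff _ _).mp h2
  rcases h2' with h2' | h2'
  · obtain ⟨q2, r2, hqr2⟩ := Walk.mem_support_iff_exists_append.mp h2'
    refine ⟨y2, y1, Or.inr ⟨rfl, rfl⟩, q2, r2, r1, ?_⟩
    rw [hqr, hqr2, Walk.append_assoc]
  · obtain ⟨q2, r2, hqr2⟩ := Walk.mem_support_iff_exists_append.mp h2'
    exact ⟨y1, y2, Or.inl ⟨rfl, rfl⟩, q1, q2, r2, by rw [hqr, hqr2]⟩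

section Splice

variable [Fintype V] [DecidableRel G.Adj]

lemma splice_contra {s t : V} (p : G.Walk s t) (hp : p.IsPath) (Hf : Finset V)
    (hHdisj : ∀ x ∈ Hf, x ∉ p.support)
    (hd : ∀ v ∈ Hf, p.length + 2 ≤ ((G.neighborFinset v) ∩ Hf).card)
    (hγ : ∀ u ∈ Hf, ∀ v ∈ Hf, u ≠ v →
      p.length + 2 ≤ ((G.neighborFinset u ∩ G.neighborFinset v) ∩ Hf).card)
    {a b f1 f2 : V} (hab : a ≠ b)
    (hf1 : f1 ∈ Hf) (hf2 : f2 ∈ Hf) (hf12 : f1 ≠ f2)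
    (seg1 : G.Walk a f1) (seg2 : G.Walk b f2)
    (hseg1 : seg1.IsPath) (hseg2 : seg2.IsPath)
    (hs1S : ∀ x ∈ seg1.support, x ∈ p.support → x = a)
    (hs1H : ∀ x ∈ seg1.support, x ∈ Hf → x = f1)
    (hs2S : ∀ x ∈ seg2.support, x ∈ p.support → x = b)
    (hs2H : ∀ x ∈ seg2.support, x ∈ Hf → x = f2)
    (hdisj12 : ∀ x ∈ seg1.support, x ∈ seg2.support → False)
    (pa : G.Walk s a) (mid : G.Walk a b) (pb : G.Walk b t)
    (hsplit : p = pa.append (mid.append pb)) :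
    ∃ q : G.Walk s t, q.IsPath ∧ p.length < q.length := by
  set L := p.length with hL
  set rest := mid.append pb with hrest
  have hp' : (pa.append rest).IsPath := by rw [← hsplit]; exact hp
  have hpa_path : pa.IsPath := hp'.of_append_left
  have hrest_path : rest.IsPath := hp'.of_append_right
  have hmid_path : mid.IsPath := hrest_path.of_append_left
  have hpb_path : pb.IsPath := hrest_path.of_append_right
  have hpa_sub : ∀ x ∈ pa.support, x ∈ p.support := by
    intro x hx; rw [hsplit]; exact (Walk.mem_support_append_iff _ _).mpr (Or.inl hx)
  have hmid_sub : ∀ x ∈ mid.support, x ∈ p.support := by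
    intro x hx; rw [hsplit]
    exact (Walk.mem_support_append_iff _ _).mpr
      (Or.inr ((Walk.mem_support_append_iff _ _).mpr (Or.inl hx)))
  have hpb_sub : ∀ x ∈ pb.support, x ∈ p.support := by
    intro x hx; rw [hsplit]
    exact (Walk.mem_support_append_iff _ _).mpr
      (Or.inr ((Walk.mem_support_append_iff _ _).mpr (Or.inr hx)))
  -- nodup-based disjointness facts
  have hdisjPA : ∀ x ∈ pa.support, x ∈ rest.support → x = a := by
    intro x hx1 hx2
    have hnd := hp'.support_nodup
    rw [Walk.support_append] at hnd
    have hdisj := List.disjoint_of_nodup_append hnd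
    have : rest.support = a :: rest.support.tail := Walk.support_eq_cons _
    rw [this] at hx2
    rcases List.mem_cons.mp hx2 with h | h
    · exact h
    · exact absurd h (fun hc => hdisj hx1 hc)
  have fact2 : ∀ x ∈ mid.support, x ∈ pb.support → x = b := by
    intro x hx1 hx2
    have hnd := hrest_path.support_nodup
    rw [Walk.support_append] at hnd
    have hdisj := List.disjoint_of_nodup_append hnd
    have : pb.support = b :: pb.support.tail := Walk.support_eq_cons _
    rw [this] at hx2
    rcases List.mem_cons.mp hx2 with h | h
    · exact h
    · exact absurd h (fun hc => hdisj hx1 hc)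
  have fact1 : ∀ x ∈ pa.support, x ∈ pb.support → False := by
    intro x hx1 hx2
    have hxa : x = a := hdisjPA x hx1 ((Walk.mem_support_append_iff _ _).mpr (Or.inr hx2))
    subst hxa
    exact hab (fact2 x mid.start_mem_support hx2)
  have fact3 : ∀ x ∈ pa.support, x ∈ mid.support → x = a := by
    intro x hx1 hx2
    exact hdisjPA x hx1 ((Walk.mem_support_append_iff _ _).mpr (Or.inl hx2))
  -- lengths
  have hLsum : L = pa.length + (mid.length + pb.length) := by
    rw [hL, hsplit, Walk.length_append, Walk.length_append]
  have hmid1 : 1 ≤ mid.length := by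
    rcases Nat.eq_zero_or_pos mid.length with h | h
    · exact absurd (Walk.eq_of_length_eq_zero h) hab
    · exact h
  have hseg1len : 1 ≤ seg1.length := by
    rcases Nat.eq_zero_or_pos seg1.length with h | h
    · exact absurd (hs1S f1 ((Walk.eq_of_length_eq_zero h) ▸ seg1.start_mem_support)
        (by exact absurd ((Walk.eq_of_length_eq_zero h).symm ▸ hf1) (by
          intro hc
          exact hHdisj a hc (hpa_sub a pa.end_mem_support)))) (by
          intro _
          exact hHdisj a ((Walk.eq_of_length_eq_zero h) ▸ hf1) (hpa_sub a pa.end_mem_support))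
    · exact h
  have hseg2len : 1 ≤ seg2.length := by
    rcases Nat.eq_zero_or_pos seg2.length with h | h
    · exact absurd ((Walk.eq_of_length_eq_zero h) ▸ hf2)
        (fun hc => hHdisj b hc (hpb_sub b pb.start_mem_support))
    · exact h
  set k := max 2 (mid.length - 1) with hk
  have hk2 : 2 ≤ k := le_max_left _ _
  have hkmid : mid.length - 1 ≤ k := le_max_right _ _
  have hkL : k ≤ L + 1 := by
    have : mid.length ≤ L := by omega
    omega
  obtain ⟨HP, hHPpath, hHPlen, hHPH, _⟩ := connector Hf L hd hγ (k - 2) ∅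
    (by simp; omega) f1 f2 hf1 hf2 hf12 (Finset.notMem_empty _) (Finset.notMem_empty _)
  have hHPlen' : HP.length = k := by omega
  -- assemble
  set W4 := seg2.reverse.append pb with hW4
  have hW4path : W4.IsPath := by
    apply isPath_append_inter hseg2.reverse hpb_path
    intro x hx1 hx2
    exact hs2S x ((mem_reverse_support seg2).mp hx1) (hpb_sub x hx2)
  have hW4mem : ∀ x ∈ W4.support, x ∈ seg2.support ∨ x ∈ pb.support := by
    intro x hx
    rcases (Walk.mem_support_append_iff _ _).mp hx with h | h
    · exact Or.inl ((mem_reverse_support seg2).mp h)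
    · exact Or.inr h
  set W3 := HP.append W4 with hW3
  have hW3path : W3.IsPath := by
    apply isPath_append_inter hHPpath hW4path
    intro x hx1 hx2
    rcases hW4mem x hx2 with h | h
    · exact hs2H x h (hHPH x hx1)
    · exact absurd (hpb_sub x h) (hHdisj x (hHPH x hx1))
  have hW3mem : ∀ x ∈ W3.support,
      x ∈ HP.support ∨ x ∈ seg2.support ∨ x ∈ pb.support := by
    intro x hx
    rcases (Walk.mem_support_append_iff _ _).mp hx with h | h
    · exact Or.inl h
    · exact Or.inr (hW4mem x h)
  set W2 := seg1.append W3 with hW2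
  have hW2path : W2.IsPath := by
    apply isPath_append_inter hseg1 hW3path
    intro x hx1 hx2
    rcases hW3mem x hx2 with h | h | h
    · exact hs1H x hx1 (hHPH x h)
    · exact absurd h (fun hc => hdisj12 x hx1 hc)
    · have hxa : x = a := hs1S x hx1 (hpb_sub x h)
      subst hxa
      exact absurd h (fun hc => hab (fact2 x mid.start_mem_support hc))
  have hW2mem : ∀ x ∈ W2.support,
      x ∈ seg1.support ∨ x ∈ HP.support ∨ x ∈ seg2.support ∨ x ∈ pb.support := by
    intro x hx
    rcases (Walk.mem_support_append_iff _ _).mp hx with h | h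
    · exact Or.inl h
    · exact Or.inr (hW3mem x h)
  set W := pa.append W2 with hW
  have hWpath : W.IsPath := by
    apply isPath_append_inter hpa_path hW2path
    intro x hx1 hx2
    rcases hW2mem x hx2 with h | h | h | h
    · exact hs1S x h (hpa_sub x hx1)
    · exact absurd (hpa_sub x hx1) (hHdisj x (hHPH x h))
    · have hxb : x = b := hs2S x h (hpa_sub x hx1)
      subst hxb
      exact absurd hx1 (fun hc => fact1 x hc pb.start_mem_support)
    · exact absurd h (fun hc => fact1 x hx1 hc)
  refine ⟨W, hWpath, ?_⟩
  have hWlen : W.length =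
      pa.length + (seg1.length + (HP.length + (seg2.length + pb.length))) := by
    rw [hW, hW2, hW3, hW4]
    simp [Walk.length_append, Walk.length_reverse]
  omega

end Splice


section StepE

variable [Fintype V] [DecidableRel G.Adj]

lemma step_E {s t : V} (p : G.Walk s t) (hp : p.IsPath)
    (hmax : ∀ q : G.Walk s t, q.IsPath → q.length ≤ p.length)
    {w : V} (hws : w ∉ p.support) (N : Finset V)
    (hNadj : ∀ x ∈ N, G.Adj w x) :
    2 * N.card + p.length + 2 ≤ 2 * Fintype.card V := by
  set L := p.length with hL
  set Sf := p.support.toFinset with hSf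
  have hSfcard : Sf.card = L + 1 := by
    rw [hSf, List.toFinset_card_of_nodup hp.support_nodup, Walk.length_support]
  set T := (Finset.range (L + 1)).filter (fun i => p.getVert i ∈ N) with hT
  have hTmem : ∀ i, i ∈ T ↔ (i < L + 1 ∧ p.getVert i ∈ N) := by
    intro i
    rw [hT, Finset.mem_filter, Finset.mem_range]
  have hnc : ∀ i, i ∈ T → (i + 1) ∈ T → False := by
    intro i hi hi1
    rw [hTmem] at hi hi1
    have hiL : i < L := by omega
    obtain ⟨q, hq, hlen, _⟩ :=
      insert_vertex p hp hws i hiL (hNadj _ hi.2).symm (hNadj _ hi1.2)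
    have := hmax q hq
    omega
  have hTcard : T.card ≤ L / 2 + 1 := by
    have h1 : T.card ≤ (Finset.range (L / 2 + 1)).card := by
      apply Finset.card_le_card_of_injOn (fun i => i / 2)
      · intro i hi
        rw [Finset.mem_coe, hTmem] at hi
        simp only [Finset.mem_coe, Finset.mem_range]
        omega
      · intro i hi j hj hij
        rw [Finset.mem_coe, hTmem] at hi hj
        simp only at hij
        by_contra hne
        have hcons : j = i + 1 ∨ i = j + 1 := by omega
        rcases hcons with h | h
        · exact hnc i ((hTmem i).mpr hi) (h ▸ (hTmem j).mpr hj)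
        · exact hnc j ((hTmem j).mpr hj) (h ▸ (hTmem i).mpr hi)
    rwa [Finset.card_range] at h1
  have hNS : (N ∩ Sf).card ≤ T.card := by
    classical
    apply Finset.card_le_card_of_injOn
      (fun v => if h : v ∈ p.support then
        Classical.choose (Walk.mem_support_iff_exists_getVert.mp h) else 0)
    · intro v hv
      rw [Finset.mem_coe, Finset.mem_inter, hSf, List.mem_toFinset] at hv
      obtain ⟨hvN, hvs⟩ := hv
      rw [Finset.mem_coe, hTmem]
      beta_reduce
      rw [dif_pos hvs]
      have hspec := Classical.choose_spec (Walk.mem_support_iff_exists_getVert.mp hvs)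
      constructor
      · omega
      · rw [hspec.1]; exact hvN
    · intro u hu v hv huv
      rw [Finset.mem_coe, Finset.mem_inter, hSf, List.mem_toFinset] at hu hv
      dsimp only at huv
      rw [dif_pos hu.2, dif_pos hv.2] at huv
      have hu' := Classical.choose_spec (Walk.mem_support_iff_exists_getVert.mp hu.2)
      have hv' := Classical.choose_spec (Walk.mem_support_iff_exists_getVert.mp hv.2)
      rw [← hu'.1, ← hv'.1, huv]
  have hsub : N ∪ Sf ⊆ Finset.univ.erase w := by
    intro x hx
    rw [Finset.mem_erase]
    refine ⟨?_, Finset.mem_univ x⟩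
    rcases Finset.mem_union.mp hx with h | h
    · exact fun hc => (hNadj x h).ne' (hc ▸ rfl)
    · intro hc
      rw [hSf, List.mem_toFinset] at h
      exact hws (hc ▸ h)
  have hcui := Finset.card_union_add_card_inter N Sf
  have hle := Finset.card_le_card hsub
  have herase : (Finset.univ.erase w).card + 1 = Fintype.card V := by
    rw [Finset.card_erase_of_mem (Finset.mem_univ w)]
    have : 1 ≤ Fintype.card V := Fintype.card_pos_iff.mpr ⟨w⟩
    rw [← Finset.card_univ] at this ⊢
    omega
  omega

end StepE

end StmtAux



/-- A graph is 2-connected. -/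
def TwoConnected {V : Type*} [Fintype V] (G : SimpleGraph V) : Prop :=
  G.Connected ∧ 3 ≤ Fintype.card V ∧ ∀ v : V, (G.induce ({v}ᶜ : Set V)).Connected

/-- `deltaB G B` is the minimum degree of the induced subgraph `G - B`. -/
noncomputable def deltaB {V : Type*} [Fintype V] [DecidableEq V] (G : SimpleGraph V)
    [DecidableRel G.Adj] (B : Finset V) : ℕ :=
  sInf { d : ℕ | ∃ v, v ∉ B ∧ ((G.neighborFinset v).filter (· ∉ B)).card = d }

/-- Let `G` be a 2-connected graph with `B ⊆ V(G)` such that `(6/5)·δ(G−B) ≥ |V(G)|`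
and `δ(G−B) ≥ 4|B|`. Then for any pair of distinct vertices `s, t`, every longest
`(s,t)`-path in `G` contains all vertices of `V(G) \ B`. -/
theorem stmt_10 {V : Type*} [Fintype V] [DecidableEq V] (G : SimpleGraph V)
    [DecidableRel G.Adj] (B : Finset V) (h2 : TwoConnected G)
    (h65 : 5 * Fintype.card V ≤ 6 * deltaB G B)
    (h4B : 4 * B.card ≤ deltaB G B)
    (s t : V) (hst : s ≠ t)
    (p : G.Walk s t) (hp : p.IsPath)
    (hmax : ∀ q : G.Walk s t, q.IsPath → q.length ≤ p.length) :
    ∀ w : V, w ∉ B → w ∈ p.support := by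
  intro w hwB
  by_contra hws
  classical
  obtain ⟨hconn, hcard3, hdel⟩ := h2
  set n := Fintype.card V with hn
  set δ := deltaB G B with hδ
  set L := p.length with hL
  have hδle : ∀ v, v ∉ B → δ ≤ ((G.neighborFinset v).filter (· ∉ B)).card := by
    intro v hv
    exact Nat.sInf_le ⟨v, hv, rfl⟩
  have hL1 : 1 ≤ L := by
    rcases Nat.eq_zero_or_pos L with h | h
    · exact absurd (SimpleGraph.Walk.eq_of_length_eq_zero h) hst
    · exact h
  set N : Finset V := (G.neighborFinset w).filter (· ∉ B) with hN
  have hNadj : ∀ x ∈ N, G.Adj w x := fun x hx =>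
    (SimpleGraph.mem_neighborFinset _ _ _).mp (Finset.mem_filter.mp hx).1
  have hNw : δ ≤ N.card := hδle w hwB
  have hE := StmtAux.step_E p hp hmax hws N hNadj
  have h2δ : 2 * δ + L + 2 ≤ 2 * n := by omega
  have h3L : 3 * L + 6 ≤ n := by omega
  -- δ + |B| + 1 ≤ n
  have hNB : Disjoint N B := by
    rw [Finset.disjoint_left]
    intro x hx hxB
    exact (Finset.mem_filter.mp hx).2 hxB
  have hNBsub : N ∪ B ⊆ Finset.univ.erase w := by
    intro x hx
    rw [Finset.mem_erase]
    refine ⟨?_, Finset.mem_univ x⟩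
    rcases Finset.mem_union.mp hx with h | h
    · exact fun hc => (hNadj x h).ne' (hc ▸ rfl)
    · exact fun hc => hwB (hc ▸ h)
  have hδn : N.card + B.card + 1 ≤ n := by
    have h1 := Finset.card_union_of_disjoint hNB
    have h2 := Finset.card_le_card hNBsub
    have h3 : (Finset.univ.erase w).card + 1 = n := by
      rw [Finset.card_erase_of_mem (Finset.mem_univ w)]
      have h4 : 1 ≤ n := Fintype.card_pos_iff.mpr ⟨w⟩
      rw [hn, ← Finset.card_univ] at h4 ⊢
      omega
    omega
  have hBn : 6 * B.card + 6 ≤ n := by omega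
  -- the off-path non-B vertices
  set Hf : Finset V := Finset.univ.filter (fun x => x ∉ B ∧ x ∉ p.support) with hHf
  have hHfmem : ∀ x, x ∈ Hf ↔ (x ∉ B ∧ x ∉ p.support) := by
    intro x
    rw [hHf, Finset.mem_filter]
    simp
  have hwHf : w ∈ Hf := (hHfmem w).mpr ⟨hwB, hws⟩
  have hSfcard : p.support.toFinset.card = L + 1 := by
    rw [List.toFinset_card_of_nodup hp.support_nodup, SimpleGraph.Walk.length_support]
  have hcover : n ≤ Hf.card + B.card + (L + 1) := by
    have hsub : Finset.univ ⊆ Hf ∪ B ∪ p.support.toFinset := by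
      intro x _
      by_cases h1 : x ∈ B
      · exact Finset.mem_union_left _ (Finset.mem_union_right _ h1)
      by_cases h2 : x ∈ p.support
      · exact Finset.mem_union_right _ (List.mem_toFinset.mpr h2)
      · exact Finset.mem_union_left _ (Finset.mem_union_left _ ((hHfmem x).mpr ⟨h1, h2⟩))
    have h1 := Finset.card_le_card hsub
    have h2 := Finset.card_union_le (Hf ∪ B) p.support.toFinset
    have h3 := Finset.card_union_le Hf B
    rw [Finset.card_univ] at h1
    omega
  have hHf2 : 2 ≤ Hf.card := by omega
  have hcompl : (Finset.univ.filter (fun x => x ∉ B)).card + B.card = n := by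
    have := Finset.card_filter_add_card_filter_not
      (s := Finset.univ) (p := fun x => x ∉ B)
    simp only [not_not] at this
    have hBeq : Finset.univ.filter (fun x => x ∈ B) = B := by
      ext x
      simp
    rw [hBeq] at this
    rw [hn, ← Finset.card_univ]
    exact this
  -- min-degree condition inside Hf
  have hd : ∀ v ∈ Hf, L + 2 ≤ ((G.neighborFinset v) ∩ Hf).card := by
    intro v hv
    obtain ⟨hvB, hvs⟩ := (hHfmem v).mp hv
    have h1 : δ ≤ ((G.neighborFinset v).filter (· ∉ B)).card := hδle v hvB
    have hsub : ((G.neighborFinset v).filter (· ∉ B)) \ p.support.toFinset ⊆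
        (G.neighborFinset v) ∩ Hf := by
      intro x hx
      rw [Finset.mem_sdiff, Finset.mem_filter] at hx
      rw [Finset.mem_inter]
      exact ⟨hx.1.1, (hHfmem x).mpr ⟨hx.1.2, fun hc => hx.2 (List.mem_toFinset.mpr hc)⟩⟩
    have h2 := Finset.le_card_sdiff p.support.toFinset
      ((G.neighborFinset v).filter (· ∉ B))
    have h3 := Finset.card_le_card hsub
    omega
  -- common-neighbour condition inside Hf
  have hγ : ∀ u ∈ Hf, ∀ v ∈ Hf, u ≠ v →
      L + 2 ≤ ((G.neighborFinset u ∩ G.neighborFinset v) ∩ Hf).card := by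
    intro u hu v hv huv
    obtain ⟨huB, hus⟩ := (hHfmem u).mp hu
    obtain ⟨hvB, hvs⟩ := (hHfmem v).mp hv
    set Au := (G.neighborFinset u).filter (· ∉ B) with hAu
    set Av := (G.neighborFinset v).filter (· ∉ B) with hAv
    have h1 : δ ≤ Au.card := hδle u huB
    have h2 : δ ≤ Av.card := hδle v hvB
    have hsubU : Au ∪ Av ⊆ Finset.univ.filter (fun x => x ∉ B) := by
      intro x hx
      rw [Finset.mem_filter]
      refine ⟨Finset.mem_univ x, ?_⟩
      rcases Finset.mem_union.mp hx with h | h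
      · exact (Finset.mem_filter.mp h).2
      · exact (Finset.mem_filter.mp h).2
    have hUI := Finset.card_union_add_card_inter Au Av
    have hUle := Finset.card_le_card hsubU
    have hsub2 : (Au ∩ Av) \ p.support.toFinset ⊆
        (G.neighborFinset u ∩ G.neighborFinset v) ∩ Hf := by
      intro x hx
      rw [Finset.mem_sdiff, Finset.mem_inter] at hx
      obtain ⟨⟨hx1, hx2⟩, hx3⟩ := hx
      rw [Finset.mem_filter] at hx1 hx2
      rw [Finset.mem_inter, Finset.mem_inter]
      exact ⟨⟨hx1.1, hx2.1⟩, (hHfmem x).mpr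
        ⟨hx1.2, fun hc => hx3 (List.mem_toFinset.mpr hc)⟩⟩
    have h3 := Finset.le_card_sdiff p.support.toFinset (Au ∩ Av)
    have h4 := Finset.card_le_card hsub2
    omega
  -- get two disjoint segments from the path to Hf
  have hdisjSH : ∀ x, x ∈ {x : V | x ∈ p.support} → x ∈ {x : V | x ∈ Hf} → False := by
    intro x hx1 hx2
    exact ((hHfmem x).mp hx2).2 hx1
  obtain ⟨w', hw'Hf, hw'w⟩ := Finset.exists_mem_ne (by omega : 1 < Hf.card) w
  have hpair := StmtAux.two_disjoint_SH hdel hconn hdisjSH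
    ⟨s, t, p.start_mem_support, p.end_mem_support, hst⟩
    (show w ∈ {x : V | x ∈ Hf} from hwHf)
    (show w' ∈ {x : V | x ∈ Hf} from hw'Hf) (fun h => hw'w h.symm)
  obtain ⟨y1, y2, f1, f2, hy1S, hy2S, hy12, hf1H, hf2H, hf12, sg1, sg2, hsg1p, hsg2p,
    hs1S, hs1H, hs2S, hs2H, hdisj12⟩ := hpair
  have hHdisj : ∀ x ∈ Hf, x ∉ p.support := fun x hx => ((hHfmem x).mp hx).2
  obtain ⟨a, b, hcase, pa, mid, pb, hsplit⟩ :=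
    StmtAux.path_split_two p (show y1 ∈ p.support from hy1S) (show y2 ∈ p.support from hy2S)
  rcases hcase with ⟨rfl, rfl⟩ | ⟨rfl, rfl⟩
  · obtain ⟨q, hq, hlt⟩ := StmtAux.splice_contra p hp Hf hHdisj hd hγ hy12
      hf1H hf2H hf12 sg1 sg2 hsg1p hsg2p hs1S hs1H hs2S hs2H hdisj12 pa mid pb hsplit
    have := hmax q hq
    omega
  · obtain ⟨q, hq, hlt⟩ := StmtAux.splice_contra p hp Hf hHdisj hd hγ (Ne.symm hy12)
      hf2H hf1H (Ne.symm hf12) sg2 sg1 hsg2p hsg1p hs2S hs2H hs1S hs1H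
      (fun x hx1 hx2 => hdisj12 x hx2 hx1) pa mid pb hsplit
    have := hmax q hq
    omega
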